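/- Let Σ_xx = diag(σ_1², …, σ_N²) with σ_1² ≥ ⋯ ≥ σ_N² > 0, let M ≤ N, and C > 0. Suppose λ★ satisfies 0 < λ★ < 2σ_M² and (1/2) ∑_{k=1}^{M} ln(2σ_k²/λ★) = C. Define A★ = [I_M, 0_{M×(N−M)}], Σ_ww★ = diag((σ_{w,1}²)★, …, (σ_{w,M}²)★) with (σ_{w,k}²)★ = λ★σ_k²/(2σ_k² − λ★), and B★ = Σ_xx A★ᵀ (A★ Σ_xx A★ᵀ + Σ_ww★)⁻¹. Then: (i) A★ A★ᵀ = I_M; (ii) the mutual-information constraint is met with equality, i.e., (1/2) ln det((Σ_ww★)⁻¹ (A★ Σ_xx A★ᵀ + Σ_ww★)) = C; and (iii) the achieved mean-squared error equals the optimal value: Tr(Σ_xx − 2 B★ A★ Σ_xx + B★ (A★ Σ_xx A★ᵀ + Σ_ww★) B★ᵀ) = ∑_{n=M+1}^{N} σ_n² + M·λ★/2. -/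

import Mathlib

open Matrix BigOperators

/-- Achievability part of Theorem 1 (all M selected sources active,
0 < λ★ < 2σ_M²): with A★ = [I_M, 0], Σ_ww★ = diag(λ★σ_k²/(2σ_k² − λ★)) and
B★ = Σ_xx A★ᵀ (A★ Σ_xx A★ᵀ + Σ_ww★)⁻¹, one has (i) A★ A★ᵀ = I_M, (ii) the
mutual-information constraint is met with equality, and (iii) the achieved MSE is
∑_{n=M+1}^N σ_n² + M λ★/2. (Indices are 0-based.) -/
theorem stmt_15 {N M : ℕ} (hM : 0 < M) (hMN : M ≤ N)
    (σ : Fin N → ℝ) (hσ : ∀ n, 0 < σ n)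
    (hsorted : ∀ i j : Fin N, i ≤ j → σ j ≤ σ i)
    (C : ℝ) (hC : 0 < C)
    (lam : ℝ) (hlam0 : 0 < lam)
    (hlamM : lam < 2 * σ ⟨M - 1, lt_of_lt_of_le (Nat.sub_lt hM one_pos) hMN⟩)
    (hrate : (1 / 2 : ℝ) *
        ∑ k : Fin M, Real.log (2 * σ (Fin.castLE hMN k) / lam) = C)
    (Astar : Matrix (Fin M) (Fin N) ℝ)
    (hAstar : Astar = Matrix.of fun (i : Fin M) (j : Fin N) =>
      if (j : ℕ) = (i : ℕ) then (1 : ℝ) else 0)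
    (Sww : Matrix (Fin M) (Fin M) ℝ)
    (hSww : Sww = Matrix.diagonal fun k : Fin M =>
      lam * σ (Fin.castLE hMN k) / (2 * σ (Fin.castLE hMN k) - lam))
    (Bstar : Matrix (Fin N) (Fin M) ℝ)
    (hBstar : Bstar =
      Matrix.diagonal σ * Astarᵀ * (Astar * Matrix.diagonal σ * Astarᵀ + Sww)⁻¹) :
    Astar * Astarᵀ = 1 ∧
    (1 / 2 : ℝ) * Real.log
        ((Sww⁻¹ * (Astar * Matrix.diagonal σ * Astarᵀ + Sww)).det) = C ∧
    Matrix.trace (Matrix.diagonal σ - (2 : ℝ) • (Bstar * Astar * Matrix.diagonal σ)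
        + Bstar * (Astar * Matrix.diagonal σ * Astarᵀ + Sww) * Bstarᵀ) =
      (∑ n ∈ Finset.univ.filter (fun n : Fin N => M ≤ (n : ℕ)), σ n)
        + (M : ℝ) * lam / 2 := by
  set σ' : Fin M → ℝ := fun k => σ (Fin.castLE hMN k) with hσ'
  have hcast : ∀ (i : Fin M) (j : Fin N), ((j : ℕ) = (i : ℕ)) ↔ j = Fin.castLE hMN i := by
    intro i j
    constructor
    · intro h; exact Fin.ext h
    · intro h; subst h; rfl
  have hA' : Astar = Matrix.of fun (i : Fin M) (j : Fin N) =>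
      if j = Fin.castLE hMN i then (1 : ℝ) else 0 := by
    rw [hAstar]; ext i j; simp only [Matrix.of_apply, hcast]
  -- positivity
  have hσ'pos : ∀ k : Fin M, 0 < σ' k := fun k => hσ _
  have hlampos : ∀ k : Fin M, lam < 2 * σ' k := by
    intro k
    have hk : (Fin.castLE hMN k) ≤ (⟨M - 1, lt_of_lt_of_le (Nat.sub_lt hM one_pos) hMN⟩ : Fin N) := by
      have : (k : ℕ) ≤ M - 1 := Nat.le_sub_one_of_lt k.isLt
      exact this
    have := hsorted _ _ hk
    linarith
  have hden : ∀ k : Fin M, 0 < 2 * σ' k - lam := fun k => by linarith [hlampos k]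
  set w : Fin M → ℝ := fun k => lam * σ' k / (2 * σ' k - lam) with hw
  set D : Fin M → ℝ := fun k => σ' k + w k with hD
  have hwpos : ∀ k, 0 < w k := fun k =>
    div_pos (mul_pos hlam0 (hσ'pos k)) (hden k)
  have hDpos : ∀ k, 0 < D k := fun k => by
    have := hwpos k; have := hσ'pos k; simp only [hD]; linarith
  have hDval : ∀ k, D k = 2 * σ' k ^ 2 / (2 * σ' k - lam) := by
    intro k
    have hd2 := (hden k).ne'
    simp only [hD, hw]
    rw [eq_div_iff hd2, add_mul, div_mul_cancel₀ _ hd2]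
    ring
  -- (i)
  have hAAT : Astar * Astarᵀ = 1 := by
    rw [hA']; ext i j
    simp [Matrix.mul_apply, Matrix.one_apply, Fin.castLE_inj, ite_and, eq_comm]
  -- A D Aᵀ
  have hADA : Astar * Matrix.diagonal σ * Astarᵀ = Matrix.diagonal σ' := by
    rw [hA']; ext i j
    simp only [Matrix.mul_apply, Matrix.diagonal_apply, Matrix.transpose_apply,
      Matrix.of_apply]
    rcases eq_or_ne i j with h | h
    · subst h
      simp [Finset.sum_ite_eq', hσ']
    · simp only [h, if_false]
      apply Finset.sum_eq_zero
      intro x _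
      rcases eq_or_ne x (Fin.castLE hMN i) with hx | hx
      · subst hx
        have : (Fin.castLE hMN i) ≠ Fin.castLE hMN j := by
          simpa [Fin.castLE_inj] using h
        simp [this]
      · simp [hx]
  have hsumD : Astar * Matrix.diagonal σ * Astarᵀ + Sww = Matrix.diagonal D := by
    rw [hADA, hSww, Matrix.diagonal_add]
  -- diagonal inverses
  have hSwwinv : Sww⁻¹ = Matrix.diagonal fun k => (w k)⁻¹ := by
    apply Matrix.inv_eq_right_inv
    rw [hSww, Matrix.diagonal_mul_diagonal,
      show (fun k => w k * (w k)⁻¹) = fun _ => (1 : ℝ) from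
        funext fun k => mul_inv_cancel₀ (hwpos k).ne', Matrix.diagonal_one]
  have hDinv : (Matrix.diagonal D)⁻¹ = Matrix.diagonal fun k => (D k)⁻¹ := by
    apply Matrix.inv_eq_right_inv
    rw [Matrix.diagonal_mul_diagonal,
      show (fun k => D k * (D k)⁻¹) = fun _ => (1 : ℝ) from
        funext fun k => mul_inv_cancel₀ (hDpos k).ne', Matrix.diagonal_one]
  -- (ii)
  have hpart2 : (1 / 2 : ℝ) * Real.log
      ((Sww⁻¹ * (Astar * Matrix.diagonal σ * Astarᵀ + Sww)).det) = C := by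
    rw [hsumD, hSwwinv, Matrix.diagonal_mul_diagonal, Matrix.det_diagonal]
    have hentry : ∀ k ∈ Finset.univ, (w k)⁻¹ * D k = 2 * σ' k / lam := by
      intro k _
      rw [hDval k]
      have hd2 := (hden k).ne'
      have hl := hlam0.ne'
      have hs := (hσ'pos k).ne'
      simp only [hw]
      rw [inv_div, div_mul_div_comm, div_eq_div_iff (mul_ne_zero (mul_ne_zero hl hs) hd2) hl]
      ring
    rw [Finset.prod_congr rfl hentry,
      Real.log_prod (fun k _ => by have := hσ'pos k; positivity)]
    exact hrate
  -- B star structure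
  set g : Fin M → ℝ := fun k => σ' k * (D k)⁻¹ with hg
  have hcomm : Matrix.diagonal σ * Astarᵀ = Astarᵀ * Matrix.diagonal σ' := by
    rw [hA']; ext n k
    simp only [Matrix.diagonal_mul, Matrix.mul_diagonal, Matrix.transpose_apply,
      Matrix.of_apply]
    rcases eq_or_ne n (Fin.castLE hMN k) with h | h
    · subst h; simp [hσ']
    · simp [h]
  have hB' : Bstar = Astarᵀ * Matrix.diagonal g := by
    rw [hBstar, hsumD, hDinv, hcomm, Matrix.mul_assoc, Matrix.diagonal_mul_diagonal]
  -- trace computations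
  have htr2 : Matrix.trace (Bstar * Astar * Matrix.diagonal σ) = ∑ k, g k * σ' k := by
    rw [hB']
    rw [show Astarᵀ * Matrix.diagonal g * Astar * Matrix.diagonal σ
        = Astarᵀ * (Matrix.diagonal g * Astar * Matrix.diagonal σ) by
      simp only [Matrix.mul_assoc]]
    rw [Matrix.trace_mul_comm]
    rw [show Matrix.diagonal g * Astar * Matrix.diagonal σ * Astarᵀ
        = Matrix.diagonal g * (Astar * Matrix.diagonal σ * Astarᵀ) by
      simp only [Matrix.mul_assoc]]
    rw [hADA, Matrix.diagonal_mul_diagonal, Matrix.trace_diagonal]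
  have htr3 : Matrix.trace (Bstar * (Astar * Matrix.diagonal σ * Astarᵀ + Sww) * Bstarᵀ)
      = ∑ k, g k * D k * g k := by
    rw [hsumD, hB', Matrix.transpose_mul, Matrix.transpose_transpose,
      Matrix.diagonal_transpose]
    rw [show Astarᵀ * Matrix.diagonal g * Matrix.diagonal D * (Matrix.diagonal g * Astar)
        = Astarᵀ * (Matrix.diagonal g * Matrix.diagonal D * Matrix.diagonal g * Astar) by
      simp only [Matrix.mul_assoc]]
    rw [Matrix.trace_mul_comm, Matrix.mul_assoc, hAAT, Matrix.mul_one,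
      Matrix.diagonal_mul_diagonal, Matrix.diagonal_mul_diagonal,
      Matrix.trace_diagonal]
  have hkey : ∀ k : Fin M, g k * σ' k = σ' k - lam / 2 := by
    intro k
    have hs := (hσ'pos k).ne'
    have hd2 := (hden k).ne'
    simp only [hg, hDval k]
    field_simp
  have hkey3 : ∀ k : Fin M, g k * D k * g k = σ' k - lam / 2 := by
    intro k
    have hd := (hDpos k).ne'
    have := hkey k
    simp only [hg] at this ⊢
    calc σ' k * (D k)⁻¹ * D k * (σ' k * (D k)⁻¹)
        = σ' k * (D k)⁻¹ * σ' k * ((D k)⁻¹ * D k) := by ring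
      _ = σ' k * (D k)⁻¹ * σ' k := by rw [inv_mul_cancel₀ hd, mul_one]
      _ = σ' k - lam / 2 := this
  -- sum splitting
  have himg : Finset.univ.filter (fun n : Fin N => ¬ M ≤ (n : ℕ))
      = Finset.map (Fin.castLEEmb hMN) Finset.univ := by
    ext n
    simp only [Finset.mem_filter, Finset.mem_univ, true_and, not_le, Finset.mem_map,
      Fin.coe_castLEEmb]
    constructor
    · intro h
      exact ⟨⟨(n : ℕ), h⟩, rfl⟩
    · rintro ⟨k, rfl⟩
      exact k.isLt
  have hsplit : ∑ n : Fin N, σ n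
      = (∑ k : Fin M, σ' k)
        + ∑ n ∈ Finset.univ.filter (fun n : Fin N => M ≤ (n : ℕ)), σ n := by
    rw [← Finset.sum_filter_add_sum_filter_not Finset.univ (fun n : Fin N => M ≤ (n : ℕ)) σ,
      add_comm]
    congr 1
    rw [himg, Finset.sum_map]
    rfl
  -- finish
  refine ⟨hAAT, hpart2, ?_⟩
  rw [Matrix.trace_add, Matrix.trace_sub, Matrix.trace_smul, htr2, htr3,
    Matrix.trace_diagonal]
  have h2 : ∑ k, g k * σ' k = ∑ k : Fin M, (σ' k - lam / 2) :=
    Finset.sum_congr rfl fun k _ => hkey k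
  have h3 : ∑ k, g k * D k * g k = ∑ k : Fin M, (σ' k - lam / 2) :=
    Finset.sum_congr rfl fun k _ => hkey3 k
  rw [h2, h3, hsplit, Finset.sum_sub_distrib]
  simp only [Finset.sum_const, Finset.card_univ, Fintype.card_fin, nsmul_eq_mul,
    smul_eq_mul]
  ring
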